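/- Let α ∈ ℝ^{m_k} minimize ‖(A q(x_k) − b) + Σ_{i=1}^{m_k} α_i ((A q(x_k) − b) − (A q(x_{k−i}) − b))‖ over all α ∈ ℝ^{m_k} (the AAg least-squares problem), define x_{k+1} = q(x_k) + Σ_{i=1}^{m_k} α_i (q(x_k) − q(x_{k−i})) and r̄_{k+1} = A x_{k+1} − b. Then ⟨r̄_{k+1}, H (r̄_{k−j} − r̄_{k−i})⟩ = 0 for all indices 0 ≤ i, j ≤ m_k, and ‖r̄_{k+1}‖ ≤ ‖H r̄_k‖, where H = I − A P. -/

import Mathlib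

open scoped RealInnerProductSpace

/-- Matrix-vector multiplication on Euclidean space. -/
noncomputable def mulV {n : ℕ} (M : Matrix (Fin n) (Fin n) ℝ)
    (v : EuclideanSpace ℝ (Fin n)) : EuclideanSpace ℝ (Fin n) :=
  Matrix.toEuclideanLin M v

lemma mulV_mul {n : ℕ} (M N : Matrix (Fin n) (Fin n) ℝ) (v : EuclideanSpace ℝ (Fin n)) :
    mulV (M * N) v = mulV M (mulV N v) := by
  simp [mulV, Matrix.toEuclideanLin_apply, Matrix.mulVec_mulVec]

lemma mulV_add {n : ℕ} (M : Matrix (Fin n) (Fin n) ℝ) (u v : EuclideanSpace ℝ (Fin n)) :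
    mulV M (u + v) = mulV M u + mulV M v := map_add (Matrix.toEuclideanLin M) u v

lemma mulV_sub {n : ℕ} (M : Matrix (Fin n) (Fin n) ℝ) (u v : EuclideanSpace ℝ (Fin n)) :
    mulV M (u - v) = mulV M u - mulV M v := map_sub (Matrix.toEuclideanLin M) u v

lemma mulV_smul {n : ℕ} (M : Matrix (Fin n) (Fin n) ℝ) (c : ℝ) (v : EuclideanSpace ℝ (Fin n)) :
    mulV M (c • v) = c • mulV M v := map_smul (Matrix.toEuclideanLin M) c v

lemma mulV_sum {n : ℕ} (M : Matrix (Fin n) (Fin n) ℝ) {ι : Type*} (s : Finset ι)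
    (f : ι → EuclideanSpace ℝ (Fin n)) :
    mulV M (∑ i ∈ s, f i) = ∑ i ∈ s, mulV M (f i) := map_sum (Matrix.toEuclideanLin M) f s

lemma mulV_one {n : ℕ} (v : EuclideanSpace ℝ (Fin n)) : mulV 1 v = v := by
  simp [mulV, Matrix.toEuclideanLin_apply]

lemma mulV_sub_mat {n : ℕ} (M N : Matrix (Fin n) (Fin n) ℝ) (v : EuclideanSpace ℝ (Fin n)) :
    mulV (M - N) v = mulV M v - mulV N v := by
  simp [mulV, Matrix.toEuclideanLin_apply, Matrix.sub_mulVec]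

lemma orth_of_min {E : Type*} [NormedAddCommGroup E] [InnerProductSpace ℝ E]
    (v u : E) (h : ∀ t : ℝ, ‖v‖ ≤ ‖v + t • u‖) : ⟪v, u⟫ = 0 := by
  by_contra hne
  have hu : u ≠ 0 := by rintro rfl; simp at hne
  have hu2 : (0:ℝ) < ‖u‖^2 := by
    have := norm_pos_iff.mpr hu; positivity
  set t := -⟪v, u⟫ / ‖u‖^2 with ht
  have hle := h t
  have hsq : ‖v + t • u‖^2 = ‖v‖^2 + 2 * t * ⟪v, u⟫ + t^2 * ‖u‖^2 := by
    rw [← real_inner_self_eq_norm_sq, ← real_inner_self_eq_norm_sq,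
      ← real_inner_self_eq_norm_sq]
    simp [inner_add_add_self, real_inner_smul_left, real_inner_smul_right, real_inner_comm]
    rw [norm_add_sq_real, norm_smul, mul_pow, Real.norm_eq_abs, sq_abs, real_inner_smul_right]
    ring
  have h2 : ‖v‖^2 ≤ ‖v + t • u‖^2 := pow_le_pow_left₀ (norm_nonneg _) hle 2
  rw [hsq] at h2
  have heq : 2 * t * ⟪v, u⟫ + t^2 * ‖u‖^2 = -⟪v, u⟫^2 / ‖u‖^2 := by
    rw [ht]; field_simp; ring
  have hlt : -⟪v, u⟫^2 / ‖u‖^2 < 0 := by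
    apply div_neg_of_neg_of_pos _ hu2
    have : (0:ℝ) < ⟪v, u⟫^2 := by positivity
    linarith
  linarith

/-- orthogonality and norm bound for the AAg residual. -/
theorem stmt_12 {n : ℕ} (A P : Matrix (Fin n) (Fin n) ℝ)
    (hA : IsUnit A.det) (hP : IsUnit P.det)
    (b : EuclideanSpace ℝ (Fin n))
    (q rb : EuclideanSpace ℝ (Fin n) → EuclideanSpace ℝ (Fin n))
    (hq : ∀ y, q y = y + mulV P (b - mulV A y))
    (hrb : ∀ y, rb y = mulV A y - b)
    (H : Matrix (Fin n) (Fin n) ℝ) (hH : H = 1 - A * P)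
    (k m : ℕ) (hm : m ≤ k)
    (x : ℕ → EuclideanSpace ℝ (Fin n))
    (α : ℕ → ℝ)
    (hopt : ∀ a : ℕ → ℝ,
      ‖(mulV A (q (x k)) - b) + ∑ i ∈ Finset.Icc 1 m,
          α i • ((mulV A (q (x k)) - b) - (mulV A (q (x (k - i))) - b))‖ ≤
      ‖(mulV A (q (x k)) - b) + ∑ i ∈ Finset.Icc 1 m,
          a i • ((mulV A (q (x k)) - b) - (mulV A (q (x (k - i))) - b))‖)
    (xk1 rk1 : EuclideanSpace ℝ (Fin n))
    (hx : xk1 = q (x k) + ∑ i ∈ Finset.Icc 1 m, α i • (q (x k) - q (x (k - i))))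
    (hrk1 : rk1 = mulV A xk1 - b) :
    (∀ i j, i ≤ m → j ≤ m → ⟪rk1, mulV H (rb (x (k - j)) - rb (x (k - i)))⟫ = 0) ∧
    ‖rk1‖ ≤ ‖mulV H (rb (x k))‖ := by
  -- key identity : A (q y) - b = H (rb y)
  have key : ∀ y, mulV A (q y) - b = mulV H (rb y) := by
    intro y
    simp only [hq, hH, hrb, mulV_sub_mat, mulV_one, mulV_mul, mulV_add, mulV_sub]
    abel
  set v0 : EuclideanSpace ℝ (Fin n) := mulV H (rb (x k)) with hv0
  set w : ℕ → EuclideanSpace ℝ (Fin n) :=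
    fun i => v0 - mulV H (rb (x (k - i))) with hw
  -- rk1 equals the optimized expression
  have hrk1' : rk1 = v0 + ∑ i ∈ Finset.Icc 1 m, α i • w i := by
    rw [hrk1, hx, mulV_add, mulV_sum]
    have : ∀ i ∈ Finset.Icc 1 m,
        mulV A (α i • (q (x k) - q (x (k - i)))) = α i • w i := by
      intro i _
      have h1 : mulV A (α i • (q (x k) - q (x (k - i))))
          = α i • ((mulV A (q (x k)) - b) - (mulV A (q (x (k - i))) - b)) := by
        rw [mulV_smul, mulV_sub]
        congr 1
        abel
      rw [h1, key, key]
    rw [Finset.sum_congr rfl this, hv0, ← key (x k)]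
    abel
  -- rewrite the optimality hypothesis
  have hopt' : ∀ a : ℕ → ℝ, ‖rk1‖ ≤ ‖v0 + ∑ i ∈ Finset.Icc 1 m, a i • w i‖ := by
    intro a
    have h := hopt a
    simp only [key] at h
    rw [hrk1']
    convert h using 4 <;> rw [hv0, hw]
  constructor
  · -- orthogonality
    have horth : ∀ c : ℕ → ℝ, ⟪rk1, ∑ i ∈ Finset.Icc 1 m, c i • w i⟫ = 0 := by
      intro c
      apply orth_of_min
      intro t
      have h := hopt' (fun i => α i + t * c i)
      have heq : v0 + ∑ i ∈ Finset.Icc 1 m, (α i + t * c i) • w i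
          = rk1 + t • ∑ i ∈ Finset.Icc 1 m, c i • w i := by
        rw [hrk1', Finset.smul_sum]
        simp only [add_smul, Finset.sum_add_distrib, smul_smul]
        abel
      rw [heq] at h
      exact h
    intro i j hi hj
    -- the target vector is w i - w j, which lies in the span of the w's
    have hwm : ∀ l, l ≤ m →
        (∑ p ∈ Finset.Icc 1 m, (if p = l then (1:ℝ) else 0) • w p) = w l := by
      intro l hl
      simp only [ite_smul, one_smul, zero_smul]
      rw [Finset.sum_ite_eq' (Finset.Icc 1 m) l w]
      rcases Nat.eq_zero_or_pos l with h0 | h0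
      · subst h0
        have : (0:ℕ) ∉ Finset.Icc 1 m := by simp
        rw [if_neg this, hw]
        simp [hv0]
      · rw [if_pos (Finset.mem_Icc.mpr ⟨h0, hl⟩)]
    have htarget : mulV H (rb (x (k - j)) - rb (x (k - i))) = w i - w j := by
      rw [mulV_sub, hw]
      simp only [sub_sub_sub_cancel_left]
    rw [htarget]
    have := horth (fun p => (if p = i then (1:ℝ) else 0) - (if p = j then (1:ℝ) else 0))
    simp only [sub_smul, Finset.sum_sub_distrib] at this
    rwa [hwm i hi, hwm j hj] at this
  · -- norm bound
    have h := hopt' (fun _ => 0)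
    simpa using h
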